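/- Let (A,b) ∈ ℂ^{n×n} × ℂⁿ be a reachable single-input pair and p a monic polynomial of degree n. Then the feedback vector f = (0,…,0,1) R(A,b)⁻¹ p(A), where R(A,b) = (b, Ab, …, A^{n−1}b) is the reachability matrix, satisfies det(zI − A + b f) = p(z) (Ackermann's formula). -/

import Mathlib

open Polynomial Matrix

/-- Ackermann's formula: for a reachable single-input pair `(A, b)` and a monic
polynomial `p` of degree `n`, the feedback row `f = (0,…,0,1) R(A,b)⁻¹ p(A)`,
with `R(A,b) = (b, Ab, …, A^{n−1}b)`, satisfies `det(zI − A + b f) = p(z)`,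
i.e. the characteristic polynomial of `A − b f` is `p`. -/
theorem ackermann_formula {n : ℕ} (hn : 0 < n)
    (A : Matrix (Fin n) (Fin n) ℂ) (b : Fin n → ℂ)
    (R : Matrix (Fin n) (Fin n) ℂ)
    (hR : R = Matrix.of fun (i j : Fin n) => ((A ^ (j : ℕ)) *ᵥ b) i)
    (hreach : IsUnit R)
    (p : Polynomial ℂ) (hmonic : p.Monic) (hdeg : p.natDegree = n)
    (e : Matrix (Fin 1) (Fin n) ℂ)
    (he : e = Matrix.of fun (_ : Fin 1) (j : Fin n) => if (j : ℕ) = n - 1 then (1 : ℂ) else 0)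
    (f : Matrix (Fin 1) (Fin n) ℂ)
    (hf : f = e * R⁻¹ * (Polynomial.aeval A p))
    (bcol : Matrix (Fin n) (Fin 1) ℂ)
    (hb : bcol = Matrix.of fun i _ => b i) :
    (A - bcol * f).charpoly = p := by
  obtain ⟨M, hM⟩ : ∃ M', M' = A - bcol * f := ⟨_, rfl⟩
  obtain ⟨w, hw⟩ : ∃ w', w' = e * R⁻¹ := ⟨_, rfl⟩
  rw [← hM]
  have hfw : f = w * (Polynomial.aeval A p) := by rw [hw]; exact hf
  have hRdet : IsUnit R.det := (Matrix.isUnit_iff_isUnit_det R).mp hreach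
  have hwR : w * R = e := by
    rw [hw, Matrix.mul_assoc, Matrix.nonsing_inv_mul R hRdet, Matrix.mul_one]
  -- columns of R
  have hcol : ∀ k : Fin n, A ^ (k : ℕ) * bcol
      = R * (Matrix.of fun i (_ : Fin 1) => if i = k then (1 : ℂ) else 0) := by
    intro k
    ext i j
    simp [hR, hb, Matrix.mul_apply, Matrix.mulVec, dotProduct]
  -- the key scalar facts
  have sc : ∀ k : ℕ, k < n → (w * A ^ k * bcol) 0 0 = if k = n - 1 then (1 : ℂ) else 0 := by
    intro k hk
    have h1 : A ^ k * bcol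
        = R * (Matrix.of fun i (_ : Fin 1) => if i = (⟨k, hk⟩ : Fin n) then (1 : ℂ) else 0) :=
      hcol ⟨k, hk⟩
    rw [Matrix.mul_assoc, h1, ← Matrix.mul_assoc, hwR, he]
    simp [Matrix.mul_apply]
  -- matrix versions of sc
  have scm : ∀ k : ℕ, k < n →
      w * A ^ k * bcol = if k = n - 1 then (1 : Matrix (Fin 1) (Fin 1) ℂ) else 0 := by
    intro k hk
    ext i j
    have hi : i = 0 := Subsingleton.elim _ _
    have hj : j = 0 := Subsingleton.elim _ _
    subst hi hj
    rw [sc k hk]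
    split_ifs <;> simp [Matrix.one_apply]
  -- L1
  have hwM : ∀ k : ℕ, k < n → w * M ^ k = w * A ^ k := by
    intro k hk
    induction k with
    | zero => simp
    | succ k ih =>
      have hk' : k < n := Nat.lt_of_succ_lt hk
      have hkn : k ≠ n - 1 := by omega
      have h0 : w * A ^ k * bcol = 0 := by
        rw [scm k hk', if_neg hkn]
      rw [pow_succ, ← Matrix.mul_assoc, ih hk', hM, Matrix.mul_sub, ← Matrix.mul_assoc, h0,
        Matrix.zero_mul, sub_zero, Matrix.mul_assoc, ← pow_succ]
  -- w * M^n
  have hMn : w * M ^ n = w * A ^ n - f := by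
    have hsn : n - 1 + 1 = n := Nat.succ_pred_eq_of_pos hn
    have h1 : w * A ^ (n-1) * bcol = 1 := by rw [scm (n-1) (by omega), if_pos rfl]
    calc w * M ^ n = w * (M ^ (n-1) * M) := by rw [← pow_succ, hsn]
    _ = w * M ^ (n-1) * M := by rw [Matrix.mul_assoc]
    _ = w * A ^ (n-1) * M := by rw [hwM (n-1) (by omega)]
    _ = w * A ^ (n-1) * A - w * A ^ (n-1) * (bcol * f) := by
        rw [hM, Matrix.mul_sub]
    _ = w * A ^ n - f := by
        rw [← Matrix.mul_assoc, h1, Matrix.one_mul, Matrix.mul_assoc, ← pow_succ, hsn]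
  -- aeval as a sum
  have haev : ∀ (q : ℂ[X]) (m : ℕ), q.natDegree < m → ∀ (N : Matrix (Fin n) (Fin n) ℂ),
      aeval N q = ∑ i ∈ Finset.range m, q.coeff i • N ^ i := by
    intro q m hq N
    conv_lhs => rw [q.as_sum_range' m hq]
    rw [map_sum]
    refine Finset.sum_congr rfl fun i _ => ?_
    simp [aeval_monomial, Algebra.smul_def]
  -- L2
  have hwp : w * aeval M p = 0 := by
    have hdp : p.natDegree < n + 1 := by omega
    have hM' : w * aeval M p = (∑ i ∈ Finset.range n, p.coeff i • (w * A ^ i)) + (w * A ^ n - f) := by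
      rw [haev p (n+1) hdp M, Matrix.mul_sum, Finset.sum_range_succ]
      have hc : p.coeff n = 1 := by
        have := hmonic.coeff_natDegree
        rwa [hdeg] at this
      simp only [Matrix.mul_smul]
      rw [hc, one_smul, hMn]
      congr 1
      refine Finset.sum_congr rfl fun i hi => ?_
      rw [hwM i (Finset.mem_range.mp hi)]
    have hA' : w * aeval A p = (∑ i ∈ Finset.range n, p.coeff i • (w * A ^ i)) + w * A ^ n := by
      rw [haev p (n+1) hdp A, Matrix.mul_sum, Finset.sum_range_succ]
      have hc : p.coeff n = 1 := by
        have := hmonic.coeff_natDegree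
        rwa [hdeg] at this
      simp only [Matrix.mul_smul]
      rw [hc, one_smul]
    rw [hM', hfw, hA']
    abel
  have hpM : aeval M p = 0 := by
    -- commutation
    have hcomm : ∀ k : ℕ, M ^ k * aeval M p = aeval M p * M ^ k := by
      have h1 : M * aeval M p = aeval M p * M := by
        have e1 : aeval M (X * p) = M * aeval M p := by simp
        have e2 : aeval M (p * X) = aeval M p * M := by simp
        rw [← e1, ← e2, X_mul]
      intro k
      exact (show Commute M (aeval M p) from h1).pow_left k
    -- observability matrix
    set O : Matrix (Fin n) (Fin n) ℂ :=
      Matrix.of (fun i j : Fin n => (w * A ^ (n - 1 - (i : ℕ))) 0 j) with hO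
    have hORij : ∀ i j : Fin n, (O * R) i j = (w * A ^ ((n - 1 - (i : ℕ)) + (j : ℕ)) * bcol) 0 0 := by
      intro i j
      have e1 : (O * R) i j = (w * A ^ (n - 1 - (i : ℕ)) * R) 0 j := by
        simp [hO, Matrix.mul_apply]
      have e2 : w * A ^ ((n - 1 - (i : ℕ)) + (j : ℕ)) * bcol
          = w * A ^ (n - 1 - (i : ℕ)) * R
            * (Matrix.of fun i' (_ : Fin 1) => if i' = j then (1 : ℂ) else 0) := by
        rw [pow_add, Matrix.mul_assoc w, Matrix.mul_assoc, hcol j, ← Matrix.mul_assoc,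
          ← Matrix.mul_assoc, Matrix.mul_assoc (w * A ^ (n - 1 - (i : ℕ)))]
      rw [e1, e2]
      simp [Matrix.mul_apply]
    have hORtri : ∀ i j : Fin n, (j : ℕ) < (i : ℕ) → (O * R) i j = 0 := by
      intro i j hij
      rw [hORij i j, sc _ (by omega)]
      rw [if_neg (by omega)]
    have hORdiag : ∀ i : Fin n, (O * R) i i = 1 := by
      intro i
      rw [hORij i i, sc _ (by omega), if_pos (by omega)]
    have hdetOR : (O * R).det = 1 := by
      rw [Matrix.det_of_upperTriangular (fun i j hij => hORtri i j hij)]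
      simp [hORdiag]
    have hOdet : IsUnit O.det := by
      refine IsUnit.of_mul_eq_one R.det ?_
      rw [← Matrix.det_mul, hdetOR]
    -- O * p(M) = 0
    have hOp : O * aeval M p = 0 := by
      have hrow : ∀ c : ℕ, c < n → w * A ^ c * aeval M p = 0 := by
        intro c hc
        rw [← hwM c hc, Matrix.mul_assoc, hcomm c, ← Matrix.mul_assoc, hwp, Matrix.zero_mul]
      ext i j
      have := congrFun (congrFun (hrow (n - 1 - (i : ℕ)) (by omega)) 0) j
      simpa [hO, Matrix.mul_apply] using this
    calc aeval M p = (O⁻¹ * O) * aeval M p := by rw [Matrix.nonsing_inv_mul O hOdet, Matrix.one_mul]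
    _ = O⁻¹ * (O * aeval M p) := by rw [Matrix.mul_assoc]
    _ = 0 := by rw [hOp, Matrix.mul_zero]
  set g : ℂ[X] := M.charpoly - p with hg
  have hchM : M.charpoly.natDegree = n := by
    rw [Matrix.charpoly_natDegree_eq_dim]; simp
  have hchMonic : M.charpoly.Monic := M.charpoly_monic
  have hgdeg : ∀ k, n ≤ k → g.coeff k = 0 := by
    intro k hk
    rcases eq_or_lt_of_le hk with h | h
    · subst h
      have c1 : M.charpoly.coeff n = 1 := by
        have := hchMonic.coeff_natDegree
        rw [hchM] at this; exact this
      have c2 : p.coeff n = 1 := by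
        have := hmonic.coeff_natDegree
        rw [hdeg] at this; exact this
      simp [hg, coeff_sub, c1, c2]
    · have c1 : M.charpoly.coeff k = 0 := coeff_eq_zero_of_natDegree_lt (by omega)
      have c2 : p.coeff k = 0 := coeff_eq_zero_of_natDegree_lt (by omega)
      simp [hg, coeff_sub, c1, c2]
  have hgM : aeval M g = 0 := by
    simp [hg, map_sub, Matrix.aeval_self_charpoly, hpM]
  have hgn : g.natDegree < n + 1 := by
    refine lt_of_le_of_lt (natDegree_sub_le _ _) ?_
    rw [hchM, hdeg]; omega
  have key : ∀ d k : ℕ, n ≤ k + d → g.coeff k = 0 := by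
    intro d
    induction d with
    | zero => intro k hk; exact hgdeg k (by omega)
    | succ d ih =>
      intro k hk
      by_cases h' : n ≤ k + d
      · exact ih k h'
      have hkd : k + d + 1 = n := by omega
      have h0 : w * M ^ d * aeval M g * bcol = 0 := by
        rw [hgM, Matrix.mul_zero, Matrix.zero_mul]
      have hexp : w * M ^ d * aeval M g * bcol
          = ∑ i ∈ Finset.range (n + 1), g.coeff i • (w * M ^ (d + i) * bcol) := by
        rw [haev g (n + 1) hgn M, Matrix.mul_sum, Matrix.sum_mul]
        refine Finset.sum_congr rfl fun i _ => ?_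
        rw [Matrix.mul_smul, Matrix.smul_mul, pow_add, ← Matrix.mul_assoc]
      have h2 : (∑ i ∈ Finset.range (n + 1), g.coeff i • (w * M ^ (d + i) * bcol)) 0 0
          = g.coeff k := by
        rw [Matrix.sum_apply]
        rw [Finset.sum_eq_single k]
        · have h1 : (w * M ^ (d + k) * bcol) 0 0 = 1 := by
            rw [hwM (d + k) (by omega), sc (d + k) (by omega), if_pos (by omega)]
          simp [Matrix.smul_apply, h1]
        · intro i hi hik
          rcases lt_or_gt_of_ne hik with hlt | hgt
          · have h1 : (w * M ^ (d + i) * bcol) 0 0 = 0 := by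
              rw [hwM (d + i) (by omega), sc (d + i) (by omega), if_neg (by omega)]
            simp [Matrix.smul_apply, h1]
          · have h1 : g.coeff i = 0 := ih i (by omega)
            simp [h1]
        · intro hk'
          exact absurd (Finset.mem_range.mpr (by omega)) hk'
      have h3 : g.coeff k = 0 := by
        rw [← h2, ← hexp, h0]
        simp
      exact h3
  have hg0 : g = 0 := Polynomial.ext fun k => by simpa using key n k (by omega)
  exact sub_eq_zero.mp hg0
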